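/- Uniqueness of the BMAX estimator: the function ψ ↦ J(ψ) = ∑_j π_j exp(−‖f_j − Y‖²/(2ω²) + (1−ν)‖ψ − f_j‖²/(2ω²)) is strictly convex on R^n and attains a unique global minimizer. -/

import Mathlib

open Real Finset

/-- The squared norm is strictly convex on a real inner product space. -/
lemma sq_norm_strictConvexOn {E : Type*} [NormedAddCommGroup E] [InnerProductSpace ℝ E] :
    StrictConvexOn ℝ Set.univ (fun x : E => ‖x‖ ^ 2) := by
  refine ⟨convex_univ, ?_⟩
  intro x _ y _ hxy a b ha hb hab
  have h1 : ‖a • x + b • y‖ ^ 2 =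
      a ^ 2 * ‖x‖ ^ 2 + 2 * (a * b * inner ℝ x y) + b ^ 2 * ‖y‖ ^ 2 := by
    rw [@norm_add_sq_real]
    simp [real_inner_smul_left, real_inner_smul_right, norm_smul, abs_of_pos ha, abs_of_pos hb]
    ring
  have h2 : ‖x - y‖ ^ 2 = ‖x‖ ^ 2 - 2 * inner ℝ x y + ‖y‖ ^ 2 := by
    rw [@norm_sub_sq_real]
  have h3 : 0 < ‖x - y‖ ^ 2 := by
    have h : (0:ℝ) < ‖x - y‖ := norm_sub_pos_iff.mpr hxy
    positivity
  simp only [smul_eq_mul]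
  nlinarith [sq_nonneg (a - b), mul_pos ha hb]

/-- Each summand of `J` is strictly convex. -/
lemma term_strictConvexOn {E : Type*} [NormedAddCommGroup E] [InnerProductSpace ℝ E]
    (c b a : ℝ) (hc : 0 < c) (ha : 0 < a) (v : E) :
    StrictConvexOn ℝ Set.univ (fun ψ : E => c * Real.exp (b + a * ‖ψ - v‖ ^ 2)) := by
  refine ⟨convex_univ, ?_⟩
  intro x _ y _ hxy p q hp hq hpq
  have hmid : p • x + q • y - v = p • (x - v) + q • (y - v) := by
    have hv : p • v + q • v = v := by rw [← add_smul, hpq, one_smul]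
    rw [smul_sub, smul_sub]
    conv_lhs => rw [← hv]
    abel
  have hne : x - v ≠ y - v := fun h => hxy (by simpa [sub_left_inj] using h)
  have h1 : ‖p • (x - v) + q • (y - v)‖ ^ 2 < p * ‖x - v‖ ^ 2 + q * ‖y - v‖ ^ 2 := by
    simpa using sq_norm_strictConvexOn.2 (Set.mem_univ (x - v)) (Set.mem_univ (y - v))
      hne hp hq hpq
  have h2 : b + a * ‖p • x + q • y - v‖ ^ 2 <
      p * (b + a * ‖x - v‖ ^ 2) + q * (b + a * ‖y - v‖ ^ 2) := by
    rw [hmid]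
    have h4 := mul_lt_mul_of_pos_left h1 ha
    have hb : p * b + q * b = b := by rw [← add_mul, hpq, one_mul]
    nlinarith [h4, hb]
  have h3 : Real.exp (p * (b + a * ‖x - v‖ ^ 2) + q * (b + a * ‖y - v‖ ^ 2)) ≤
      p * Real.exp (b + a * ‖x - v‖ ^ 2) + q * Real.exp (b + a * ‖y - v‖ ^ 2) := by
    simpa using convexOn_exp.2 (Set.mem_univ (b + a * ‖x - v‖ ^ 2))
      (Set.mem_univ (b + a * ‖y - v‖ ^ 2)) hp.le hq.le hpq
  simp only [smul_eq_mul]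
  calc c * Real.exp (b + a * ‖p • x + q • y - v‖ ^ 2)
      < c * Real.exp (p * (b + a * ‖x - v‖ ^ 2) + q * (b + a * ‖y - v‖ ^ 2)) := by
        exact mul_lt_mul_of_pos_left (Real.exp_lt_exp.2 h2) hc
    _ ≤ c * (p * Real.exp (b + a * ‖x - v‖ ^ 2) + q * Real.exp (b + a * ‖y - v‖ ^ 2)) :=
        mul_le_mul_of_nonneg_left h3 hc.le
    _ = p * (c * Real.exp (b + a * ‖x - v‖ ^ 2)) + q * (c * Real.exp (b + a * ‖y - v‖ ^ 2)) := by
        ring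

/-- A sum of strictly convex functions over a nonempty finset is strictly convex. -/
lemma sum_strictConvexOn {E : Type*} [NormedAddCommGroup E] [InnerProductSpace ℝ E]
    {ι : Type*} (s : Finset ι) (hs : s.Nonempty) (g : ι → E → ℝ)
    (h : ∀ i ∈ s, StrictConvexOn ℝ Set.univ (g i)) :
    StrictConvexOn ℝ Set.univ (fun x => ∑ i ∈ s, g i x) := by
  refine ⟨convex_univ, ?_⟩
  intro x _ y _ hxy p q hp hq hpq
  have : ∑ i ∈ s, g i (p • x + q • y) < ∑ i ∈ s, (p * g i x + q * g i y) := by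
    refine Finset.sum_lt_sum_of_nonempty hs fun i hi => ?_
    simpa using (h i hi).2 (Set.mem_univ x) (Set.mem_univ y) hxy hp hq hpq
  simpa [Finset.sum_add_distrib, Finset.mul_sum, smul_eq_mul] using this

theorem J_strictly_convex_unique_min (n M : ℕ) (hM : 0 < M)
    (Y : EuclideanSpace ℝ (Fin n))
    (f : Fin M → EuclideanSpace ℝ (Fin n)) (pi : Fin M → ℝ)
    (hpi : ∀ j, 0 < pi j) (hpi1 : ∑ j, pi j = 1)
    (ν ω : ℝ) (hν : ν ∈ Set.Ioo (0:ℝ) 1) (hω : 0 < ω)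
    (J : EuclideanSpace ℝ (Fin n) → ℝ)
    (hJ : ∀ ψ, J ψ = ∑ j, pi j *
      Real.exp (-‖f j - Y‖^2 / (2*ω^2) + (1-ν) * ‖ψ - f j‖^2 / (2*ω^2))) :
    StrictConvexOn ℝ Set.univ J ∧ ∃! ψstar, ∀ ψ, J ψstar ≤ J ψ := by
  obtain ⟨hν0, hν1⟩ := hν
  set a : ℝ := (1 - ν) / (2 * ω ^ 2) with ha_def
  have h1ν : (0:ℝ) < 1 - ν := by linarith
  have ha : 0 < a := by positivity
  have hJeq : ∀ ψ, J ψ = ∑ j, pi j *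
      Real.exp (-‖f j - Y‖ ^ 2 / (2 * ω ^ 2) + a * ‖ψ - f j‖ ^ 2) := by
    intro ψ
    rw [hJ ψ]
    refine Finset.sum_congr rfl fun j _ => ?_
    rw [ha_def]; ring_nf
  -- strict convexity
  have hM' : (Finset.univ : Finset (Fin M)).Nonempty := by
    haveI : NeZero M := ⟨hM.ne'⟩
    exact Finset.univ_nonempty
  have hsc : StrictConvexOn ℝ Set.univ J := by
    have := sum_strictConvexOn (Finset.univ : Finset (Fin M)) hM'
      (fun j ψ => pi j * Real.exp (-‖f j - Y‖ ^ 2 / (2 * ω ^ 2) + a * ‖ψ - f j‖ ^ 2))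
      (fun j _ => term_strictConvexOn (pi j) (-‖f j - Y‖ ^ 2 / (2 * ω ^ 2)) a
        (hpi j) ha (f j))
    exact this.congr fun ψ _ => (hJeq ψ).symm
  refine ⟨hsc, ?_⟩
  -- existence of a minimizer via coercivity
  have hcont : Continuous J := by
    have : J = fun ψ => ∑ j, pi j *
        Real.exp (-‖f j - Y‖ ^ 2 / (2 * ω ^ 2) + a * ‖ψ - f j‖ ^ 2) := funext hJeq
    rw [this]
    exact continuous_finset_sum _ fun j _ => continuous_const.mul
      (Real.continuous_exp.comp (continuous_const.add
        (continuous_const.mul ((continuous_id.sub continuous_const).norm.pow 2))))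
  set j0 : Fin M := ⟨0, hM⟩
  have hlow : ∀ ψ, pi j0 * Real.exp (-‖f j0 - Y‖ ^ 2 / (2 * ω ^ 2) + a * ‖ψ - f j0‖ ^ 2)
      ≤ J ψ := by
    intro ψ
    rw [hJeq ψ]
    exact Finset.single_le_sum
      (f := fun j => pi j * Real.exp (-‖f j - Y‖ ^ 2 / (2 * ω ^ 2) + a * ‖ψ - f j‖ ^ 2))
      (fun j _ => by have := (hpi j).le; positivity) (Finset.mem_univ j0)
  have htend : Filter.Tendsto J (Filter.cocompact _) Filter.atTop := by
    refine Filter.tendsto_atTop_mono hlow ?_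
    have h1 : Filter.Tendsto (fun ψ : EuclideanSpace ℝ (Fin n) => ‖ψ - f j0‖)
        (Filter.cocompact _) Filter.atTop := by
      refine Filter.tendsto_atTop_mono (fun ψ => norm_sub_norm_le ψ (f j0)) ?_
      exact Filter.tendsto_atTop_add_const_right _ (-‖f j0‖)
        tendsto_norm_cocompact_atTop |>.congr (fun ψ => by ring)
    have h2 : Filter.Tendsto
        (fun ψ : EuclideanSpace ℝ (Fin n) =>
          -‖f j0 - Y‖ ^ 2 / (2 * ω ^ 2) + a * ‖ψ - f j0‖ ^ 2)
        (Filter.cocompact _) Filter.atTop := by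
      apply Filter.tendsto_atTop_add_const_left
      exact (Filter.Tendsto.const_mul_atTop ha
        ((Filter.tendsto_pow_atTop (two_ne_zero)).comp h1))
    exact Filter.Tendsto.const_mul_atTop (hpi j0) (Real.tendsto_exp_atTop.comp h2)
  obtain ⟨ψstar, hmin⟩ := hcont.exists_forall_le htend
  refine ⟨ψstar, hmin, fun ψ' hψ' => ?_⟩
  -- uniqueness from strict convexity
  by_contra hne
  have heq : J ψ' = J ψstar := le_antisymm (hψ' ψstar) (hmin ψ')
  have hlt := hsc.2 (Set.mem_univ ψ') (Set.mem_univ ψstar) hne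
    (by norm_num : (0:ℝ) < 1/2) (by norm_num : (0:ℝ) < 1/2) (by norm_num)
  have := hmin ((1/2 : ℝ) • ψ' + (1/2 : ℝ) • ψstar)
  simp only [smul_eq_mul, heq] at hlt
  linarith
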